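/- Let x = (x₀, x') and y = (y₀, y') ∈ ℝ × ℝ³ with x' ≠ y'. Define p_κ^x(u) = (κ²/(2π))·exp(−κ²|u−x|²/4) on ℝ⁴ and (∂₀⁻¹p_κ^y)(u₀, u') = (1/2)∫_{−∞}^{u₀} p_κ^y(τ, u') dτ − (1/2)∫_{u₀}^∞ p_κ^y(τ, u') dτ. Then lim_{κ→∞} κ³ ∫_{ℝ⁴} p_κ^x(u) (∂₀⁻¹p_κ^y)(u) du = 0. -/

import Mathlib

open MeasureTheory Real Filter

/-- The 4-dimensional Gaussian `p_κ^x` on `ℝ × ℝ³`, centered at `x`, with variance `1/κ²`. -/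
noncomputable def pGauss4 (κ : ℝ) (x u : ℝ × EuclideanSpace ℝ (Fin 3)) : ℝ :=
  κ ^ 2 / (2 * Real.pi) * Real.exp (-(κ ^ 2) * ((u.1 - x.1) ^ 2 + ‖u.2 - x.2‖ ^ 2) / 4)

/-- The symmetrized antiderivative `∂₀⁻¹ p_κ^y` in the time variable. -/
noncomputable def timeAntideriv (κ : ℝ) (y : ℝ × EuclideanSpace ℝ (Fin 3))
    (u : ℝ × EuclideanSpace ℝ (Fin 3)) : ℝ :=
  (1 / 2) * (∫ τ in Set.Iic u.1, pGauss4 κ y (τ, u.2)) -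
    (1 / 2) * ∫ τ in Set.Ici u.1, pGauss4 κ y (τ, u.2)

local notation "E3" => EuclideanSpace ℝ (Fin 3)

lemma gauss1d_integrable {b : ℝ} (hb : 0 < b) (c : ℝ) :
    Integrable (fun t : ℝ => rexp (-b * (t - c) ^ 2)) :=
  (integrable_exp_neg_mul_sq hb).comp_sub_right c

lemma gauss1d_integral {b : ℝ} (_hb : 0 < b) (c : ℝ) :
    ∫ t : ℝ, rexp (-b * (t - c) ^ 2) = Real.sqrt (π / b) := by
  rw [integral_sub_right_eq_self (fun t => rexp (-b * t ^ 2)) c, integral_gaussian]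

lemma gauss1d_integral' {κ : ℝ} (hκ : 0 < κ) (c : ℝ) :
    ∫ t : ℝ, rexp (-(κ ^ 2 / 4) * (t - c) ^ 2) = 2 * Real.sqrt π / κ := by
  rw [gauss1d_integral (by positivity) c,
    show π / (κ ^ 2 / 4) = (2 * Real.sqrt π / κ) ^ 2 by
      rw [div_pow, mul_pow, sq_sqrt pi_pos.le]; field_simp; ring,
    Real.sqrt_sq (by positivity)]

lemma gaussE3_integrable {b : ℝ} (hb : 0 < b) (m : E3) :
    Integrable (fun v : E3 => rexp (-b * ‖v - m‖ ^ 2)) := by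
  have h : Integrable (fun v : E3 => rexp (-b * ‖v‖ ^ 2)) := by
    have h0 := (GaussianFourier.integrable_cexp_neg_mul_sq_norm_add
      (V := E3) (b := (b : ℂ)) (by simpa) 0 0).norm
    refine h0.congr (Filter.Eventually.of_forall fun v => ?_)
    simp [Complex.norm_exp, ← Complex.ofReal_pow]
  exact h.comp_sub_right m

lemma gaussE3_integral {b : ℝ} (hb : 0 < b) (m : E3) :
    ∫ v : E3, rexp (-b * ‖v - m‖ ^ 2) = (π / b) ^ ((3 : ℝ) / 2) := by
  rw [integral_sub_right_eq_self (fun v : E3 => rexp (-b * ‖v‖ ^ 2)) m,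
    GaussianFourier.integral_rexp_neg_mul_sq_norm hb]
  norm_num [finrank_euclideanSpace_fin]

lemma pGauss4_nonneg (κ : ℝ) (x u : ℝ × E3) : 0 ≤ pGauss4 κ x u := by
  unfold pGauss4; positivity

lemma pGauss4_slice (κ : ℝ) (y : ℝ × E3) (τ : ℝ) (v : E3) :
    pGauss4 κ y (τ, v) =
      κ ^ 2 / (2 * π) * rexp (-(κ ^ 2 / 4) * ‖v - y.2‖ ^ 2) *
        rexp (-(κ ^ 2 / 4) * (τ - y.1) ^ 2) := by
  unfold pGauss4
  rw [mul_assoc, ← Real.exp_add]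
  norm_num
  left
  congr 1
  ring

lemma pGauss4_split (κ : ℝ) (x : ℝ × E3) (u : ℝ × E3) :
    pGauss4 κ x u =
      κ ^ 2 / (2 * π) * rexp (-(κ ^ 2 / 4) * (u.1 - x.1) ^ 2) *
        rexp (-(κ ^ 2 / 4) * ‖u.2 - x.2‖ ^ 2) := by
  unfold pGauss4
  rw [mul_assoc, ← Real.exp_add]
  norm_num
  left
  congr 1
  ring

lemma slice_integrable {κ : ℝ} (hκ : 0 < κ) (y : ℝ × E3) (v : E3) :
    Integrable (fun τ : ℝ => pGauss4 κ y (τ, v)) := by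
  have h : (fun τ : ℝ => pGauss4 κ y (τ, v)) = fun τ =>
      κ ^ 2 / (2 * π) * rexp (-(κ ^ 2 / 4) * ‖v - y.2‖ ^ 2) *
        rexp (-(κ ^ 2 / 4) * (τ - y.1) ^ 2) := by
    funext τ; exact pGauss4_slice κ y τ v
  rw [h]
  exact (gauss1d_integrable (by positivity) y.1).const_mul _

lemma slice_integral {κ : ℝ} (hκ : 0 < κ) (y : ℝ × E3) (v : E3) :
    ∫ τ : ℝ, pGauss4 κ y (τ, v) =
      κ / Real.sqrt π * rexp (-(κ ^ 2 / 4) * ‖v - y.2‖ ^ 2) := by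
  have h : (fun τ : ℝ => pGauss4 κ y (τ, v)) = fun τ =>
      κ ^ 2 / (2 * π) * rexp (-(κ ^ 2 / 4) * ‖v - y.2‖ ^ 2) *
        rexp (-(κ ^ 2 / 4) * (τ - y.1) ^ 2) := by
    funext τ; exact pGauss4_slice κ y τ v
  rw [h, integral_const_mul, gauss1d_integral' hκ y.1]
  field_simp
  ring_nf
  rw [Real.sq_sqrt pi_pos.le]

lemma timeAntideriv_abs_le {κ : ℝ} (hκ : 0 < κ) (y : ℝ × E3) (u : ℝ × E3) :
    |timeAntideriv κ y u| ≤ κ / Real.sqrt π * rexp (-(κ ^ 2 / 4) * ‖u.2 - y.2‖ ^ 2) := by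
  set T := κ / Real.sqrt π * rexp (-(κ ^ 2 / 4) * ‖u.2 - y.2‖ ^ 2) with hT
  have hi := slice_integrable hκ y u.2
  have hnn : ∀ τ : ℝ, 0 ≤ pGauss4 κ y (τ, u.2) := fun τ => pGauss4_nonneg _ _ _
  have hA : (∫ τ in Set.Iic u.1, pGauss4 κ y (τ, u.2)) ≤ T := by
    rw [hT, ← slice_integral hκ y u.2]
    exact setIntegral_le_integral hi (Filter.Eventually.of_forall hnn)
  have hB : (∫ τ in Set.Ici u.1, pGauss4 κ y (τ, u.2)) ≤ T := by
    rw [hT, ← slice_integral hκ y u.2]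
    exact setIntegral_le_integral hi (Filter.Eventually.of_forall hnn)
  have hA0 : 0 ≤ ∫ τ in Set.Iic u.1, pGauss4 κ y (τ, u.2) :=
    setIntegral_nonneg measurableSet_Iic fun τ _ => hnn τ
  have hB0 : 0 ≤ ∫ τ in Set.Ici u.1, pGauss4 κ y (τ, u.2) :=
    setIntegral_nonneg measurableSet_Ici fun τ _ => hnn τ
  rw [abs_le]
  unfold timeAntideriv
  constructor <;> linarith

lemma midpoint_ident (a b v : E3) :
    ‖v - a‖ ^ 2 + ‖v - b‖ ^ 2 =
      2 * ‖v - (1 / 2 : ℝ) • (a + b)‖ ^ 2 + ‖a - b‖ ^ 2 / 2 := by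
  have hpar := parallelogram_law_with_norm ℝ (v - a) (v - b)
  have h1 : (v - a) + (v - b) = (2 : ℝ) • (v - (1 / 2 : ℝ) • (a + b)) := by
    rw [smul_sub, smul_smul]; norm_num; module
  have h2 : (v - a) - (v - b) = b - a := by abel
  rw [h1, h2, norm_smul] at hpar
  have h3 : ‖a - b‖ = ‖b - a‖ := norm_sub_rev a b
  rw [h3]
  have h4 : ‖(2 : ℝ)‖ = 2 := by norm_num
  rw [h4] at hpar
  nlinarith [hpar]

lemma main_bound {κ : ℝ} (hκ : 0 < κ) (x y : ℝ × E3) :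
    ‖∫ u : ℝ × E3, pGauss4 κ x u * timeAntideriv κ y u‖ ≤
      (κ ^ 2 / (2 * π) * (2 * Real.sqrt π / κ)) *
        ((κ / Real.sqrt π * rexp (-(κ ^ 2 / 8) * ‖x.2 - y.2‖ ^ 2)) *
          (π / (κ ^ 2 / 2)) ^ ((3 : ℝ) / 2)) := by
  set m : E3 := (1 / 2 : ℝ) • (x.2 + y.2) with hm
  set F : ℝ → ℝ := fun t => κ ^ 2 / (2 * π) * rexp (-(κ ^ 2 / 4) * (t - x.1) ^ 2) with hF
  set G : E3 → ℝ := fun v =>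
    (κ / Real.sqrt π * rexp (-(κ ^ 2 / 8) * ‖x.2 - y.2‖ ^ 2)) *
      rexp (-(κ ^ 2 / 2) * ‖v - m‖ ^ 2) with hG
  have hFi : Integrable F := (gauss1d_integrable (by positivity) x.1).const_mul _
  have hGi : Integrable G := (gaussE3_integrable (by positivity) m).const_mul _
  have hpt : ∀ u : ℝ × E3, ‖pGauss4 κ x u * timeAntideriv κ y u‖ ≤ F u.1 * G u.2 := by
    intro u
    have hexp : rexp (-(κ ^ 2 / 4) * ‖u.2 - x.2‖ ^ 2) * rexp (-(κ ^ 2 / 4) * ‖u.2 - y.2‖ ^ 2)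
        = rexp (-(κ ^ 2 / 8) * ‖x.2 - y.2‖ ^ 2) * rexp (-(κ ^ 2 / 2) * ‖u.2 - m‖ ^ 2) := by
      rw [← Real.exp_add, ← Real.exp_add]
      congr 1
      rw [hm]
      linear_combination (-(κ ^ 2) / 4) * midpoint_ident x.2 y.2 u.2
    have h1 : ‖pGauss4 κ x u * timeAntideriv κ y u‖ =
        pGauss4 κ x u * |timeAntideriv κ y u| := by
      rw [norm_mul, Real.norm_eq_abs, Real.norm_eq_abs,
        abs_of_nonneg (pGauss4_nonneg κ x u)]
    rw [h1]
    calc pGauss4 κ x u * |timeAntideriv κ y u|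
        ≤ pGauss4 κ x u * (κ / Real.sqrt π * rexp (-(κ ^ 2 / 4) * ‖u.2 - y.2‖ ^ 2)) :=
          mul_le_mul_of_nonneg_left (timeAntideriv_abs_le hκ y u) (pGauss4_nonneg κ x u)
      _ = F u.1 * G u.2 := by
          rw [pGauss4_split κ x u]
          simp only [hF, hG]
          linear_combination (κ ^ 2 / (2 * π) * rexp (-(κ ^ 2 / 4) * (u.1 - x.1) ^ 2) * (κ / Real.sqrt π)) * hexp
  calc ‖∫ u : ℝ × E3, pGauss4 κ x u * timeAntideriv κ y u‖
      ≤ ∫ u : ℝ × E3, F u.1 * G u.2 := by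
        refine norm_integral_le_of_norm_le ?_ (Filter.Eventually.of_forall hpt)
        rw [Measure.volume_eq_prod]
        exact hFi.mul_prod hGi
    _ = (∫ t : ℝ, F t) * ∫ v : E3, G v := by rw [Measure.volume_eq_prod, integral_prod_mul]
    _ = (κ ^ 2 / (2 * π) * (2 * Real.sqrt π / κ)) *
        ((κ / Real.sqrt π * rexp (-(κ ^ 2 / 8) * ‖x.2 - y.2‖ ^ 2)) *
          (π / (κ ^ 2 / 2)) ^ ((3 : ℝ) / 2)) := by
        simp only [hF, hG]
        rw [integral_const_mul, integral_const_mul, gauss1d_integral' hκ x.1,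
          gaussE3_integral (by positivity) m]

theorem pairing_decay (x y : ℝ × EuclideanSpace ℝ (Fin 3)) (h : x.2 ≠ y.2) :
    Tendsto (fun κ : ℝ => κ ^ 3 *
      ∫ u : ℝ × EuclideanSpace ℝ (Fin 3), pGauss4 κ x u * timeAntideriv κ y u)
      atTop (nhds 0) := by
  have hd2 : (0 : ℝ) < ‖x.2 - y.2‖ ^ 2 := by
    have h0 : x.2 - y.2 ≠ 0 := sub_ne_zero.mpr h
    exact pow_pos (norm_pos_iff.mpr h0) 2
  set c : ℝ := ‖x.2 - y.2‖ ^ 2 / 8 with hc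
  have hcpos : 0 < c := by rw [hc]; exact div_pos hd2 (by norm_num)
  have key : Tendsto (fun κ : ℝ => κ ^ 2 * rexp (-c * κ ^ 2)) atTop (nhds 0) := by
    have h1 : Tendsto (fun t : ℝ => (1 / c) * (t ^ 1 * rexp (-t))) atTop (nhds 0) := by
      simpa using (tendsto_pow_mul_exp_neg_atTop_nhds_zero 1).const_mul (1 / c)
    have h2 : Tendsto (fun κ : ℝ => c * κ ^ 2) atTop atTop :=
      Tendsto.const_mul_atTop hcpos (tendsto_pow_atTop two_ne_zero)
    refine (h1.comp h2).congr fun κ => ?_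
    simp only [Function.comp_apply, pow_one]
    field_simp
  have L : Tendsto (fun κ : ℝ =>
      (2 * π) ^ ((3 : ℝ) / 2) / π * (κ ^ 2 * rexp (-c * κ ^ 2))) atTop (nhds 0) := by
    simpa using key.const_mul ((2 * π) ^ ((3 : ℝ) / 2) / π)
  refine squeeze_zero_norm' ?_ L
  filter_upwards [eventually_ge_atTop (1 : ℝ)] with κ hκ1
  have hκ : (0 : ℝ) < κ := lt_of_lt_of_le one_pos hκ1
  have hb := main_bound hκ x y
  have hrpow : (π / (κ ^ 2 / 2)) ^ ((3 : ℝ) / 2) = (2 * π) ^ ((3 : ℝ) / 2) / κ ^ 3 := by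
    rw [show π / (κ ^ 2 / 2) = 2 * π / κ ^ 2 by ring,
      Real.div_rpow (by positivity) (by positivity)]
    congr 1
    rw [← Real.rpow_natCast κ 2, ← Real.rpow_mul hκ.le]
    norm_num
  rw [hrpow] at hb
  have hexp : rexp (-(κ ^ 2 / 8) * ‖x.2 - y.2‖ ^ 2) = rexp (-c * κ ^ 2) := by
    rw [hc]; ring_nf
  rw [hexp] at hb
  calc ‖κ ^ 3 * ∫ u : ℝ × E3, pGauss4 κ x u * timeAntideriv κ y u‖
      = κ ^ 3 * ‖∫ u : ℝ × E3, pGauss4 κ x u * timeAntideriv κ y u‖ := by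
        rw [norm_mul, Real.norm_eq_abs, abs_of_nonneg (by positivity : (0:ℝ) ≤ κ ^ 3)]
    _ ≤ κ ^ 3 * ((κ ^ 2 / (2 * π) * (2 * Real.sqrt π / κ)) *
        ((κ / Real.sqrt π * rexp (-c * κ ^ 2)) * ((2 * π) ^ ((3 : ℝ) / 2) / κ ^ 3))) :=
        mul_le_mul_of_nonneg_left hb (by positivity)
    _ = (2 * π) ^ ((3 : ℝ) / 2) / π * (κ ^ 2 * rexp (-c * κ ^ 2)) := by
        have hs : Real.sqrt π * Real.sqrt π = π := Real.mul_self_sqrt pi_pos.le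
        field_simp
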